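/- If N = (N_2,…,N_ℓ) is a nest, then over K = ℝ there exists a base chamber B of the cone c(Ish_N) such that Σ_{C ∈ Ch(c(Ish_N))} t^{d(B,C)} = (1+t)·∏_{i=2}^{ℓ}(1 + t + … + t^{|N_i|+ℓ−i}), where d(B,C) is the number of hyperplanes of the arrangement separating B from C. -/

import Mathlib

noncomputable section

variable {V : Type*} [TopologicalSpace V] [AddCommGroup V] [Module ℝ V]

/-- The complement of a central arrangement given by linear forms. -/
def arrCompl (A : Set (V →ₗ[ℝ] ℝ)) : Set V := {v | ∀ f ∈ A, f v ≠ 0}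

/-- The chambers: connected components of the complement. -/
def chambers (A : Set (V →ₗ[ℝ] ℝ)) : Set (Set V) :=
  {C | ∃ x ∈ arrCompl A, C = connectedComponentIn (arrCompl A) x}

/-- A hyperplane `f = 0` separates `B` from `C`. -/
def Separates (f : V →ₗ[ℝ] ℝ) (B C : Set V) : Prop :=
  ((∀ v ∈ B, f v < 0) ∧ (∀ v ∈ C, 0 < f v)) ∨
    ((∀ v ∈ B, 0 < f v) ∧ (∀ v ∈ C, f v < 0))

/-- The number of hyperplanes of `A` separating `B` from `C`. -/
def sepCount (A : Set (V →ₗ[ℝ] ℝ)) (B C : Set V) : ℕ :=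
  {f ∈ A | Separates f B C}.ncard

/-- coordinate projection -/
def pr {ι : Type*} (o : ι) : ((ι → ℝ) →ₗ[ℝ] ℝ) := LinearMap.proj o

/-- The linear forms of the cone over the `N`-Ish arrangement in `ℝ^{ℓ+1}`, `ℓ = n+1`:
`z`, `x_i - x_j` (2 ≤ i < j ≤ ℓ), `x_1 - x_j - a z` (2 ≤ j ≤ ℓ, a ∈ N_j).
Coordinates: `some 0` is `x₁`, `some i.succ` is `x_{i+2}`, `none` is `z`. -/
def coneIshLin (n : ℕ) (N : Fin n → Finset ℝ) :
    Set ((Option (Fin (n + 1)) → ℝ) →ₗ[ℝ] ℝ) :=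
  {pr none} ∪
    {f | ∃ i j : Fin n, i < j ∧ f = pr (some i.succ) - pr (some j.succ)} ∪
    {f | ∃ j : Fin n, ∃ a ∈ N j, f = pr (some 0) - pr (some j.succ) - a • pr none}


open Finset
open scoped Classical


/-- One can place a new point with any prescribed number of elements of `T` below it. -/
lemma exists_rank_point (T : Finset ℝ) (p : ℕ) (hp : p ≤ T.card) :
    ∃ x, x ∉ T ∧ (T.filter (· < x)).card = p := by
  induction p with
  | zero =>
    obtain ⟨x, hx⟩ : ∃ x, ∀ t ∈ T, x < t := by
      rcases T.eq_empty_or_nonempty with h | h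
      · exact ⟨0, by simp [h]⟩
      · exact ⟨T.min' h - 1, fun t ht => lt_of_lt_of_le (by linarith) (T.min'_le t ht)⟩
    refine ⟨x, fun hxT => lt_irrefl x (hx x hxT), ?_⟩
    rw [Finset.card_eq_zero, Finset.filter_eq_empty_iff]
    intro t ht
    exact not_lt.2 (hx t ht).le
  | succ p ih =>
    obtain ⟨x, hxT, hcard⟩ := ih (le_of_lt hp)
    set U := T.filter (x < ·) with hU
    have hUcard : (T.filter (· < x)).card + U.card = T.card := by
      have hU2 : U = T.filter (fun a => ¬ a < x) := by
        apply Finset.filter_congr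
        intro t ht
        have htx : t ≠ x := fun h => hxT (h ▸ ht)
        constructor
        · intro h; exact not_lt.2 h.le
        · intro h; exact lt_of_le_of_ne (not_lt.1 h) (Ne.symm htx)
      rw [hU2, Finset.card_filter_add_card_filter_not]
    have hUne : U.Nonempty := by
      rw [← Finset.card_pos]
      omega
    set t0 := U.min' hUne with ht0
    have ht0U : t0 ∈ U := U.min'_mem hUne
    have ht0T : t0 ∈ T := (Finset.mem_filter.1 ht0U).1
    have hxt0 : x < t0 := (Finset.mem_filter.1 ht0U).2
    set U' := U.erase t0 with hU'
    set x' : ℝ := if h : U'.Nonempty then (t0 + U'.min' h) / 2 else t0 + 1 with hx'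
    have ht0x' : t0 < x' := by
      rw [hx']
      split_ifs with h
      · have h1 : U'.min' h ∈ U' := U'.min'_mem h
        have h2 : t0 < U'.min' h := by
          have := U.min'_le (U'.min' h) (Finset.mem_of_mem_erase h1)
          have hne := Finset.ne_of_mem_erase h1
          exact lt_of_le_of_ne this (Ne.symm hne)
        linarith
      · linarith
    have hx'U' : ∀ s ∈ U', x' < s := by
      intro s hs
      have hne : U'.Nonempty := ⟨s, hs⟩
      rw [hx', dif_pos hne]
      have h2 : t0 < U'.min' hne := by
        have := U.min'_le (U'.min' hne) (Finset.mem_of_mem_erase (U'.min'_mem hne))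
        exact lt_of_le_of_ne this (Ne.symm (Finset.ne_of_mem_erase (U'.min'_mem hne)))
      have := U'.min'_le s hs
      linarith
    have key : ∀ s ∈ T, (s < x' ↔ s = t0 ∨ s < x) := by
      intro s hs
      constructor
      · intro hsx'
        by_cases h1 : s < x
        · exact Or.inr h1
        · have hsx : x < s := lt_of_le_of_ne (not_lt.1 h1) (fun h => hxT (h ▸ hs))
          have hsU : s ∈ U := Finset.mem_filter.2 ⟨hs, hsx⟩
          by_cases h2 : s = t0
          · exact Or.inl h2
          · exact absurd (hx'U' s (Finset.mem_erase.2 ⟨h2, hsU⟩)) (not_lt.2 hsx'.le)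
      · rintro (rfl | h)
        · exact ht0x'
        · linarith
    have hx'T : x' ∉ T := by
      intro hx'T
      have hx'x : x < x' := by linarith
      have hx'U : x' ∈ U := Finset.mem_filter.2 ⟨hx'T, hx'x⟩
      have hx'ne : x' ≠ t0 := by linarith
      exact lt_irrefl x' (hx'U' x' (Finset.mem_erase.2 ⟨hx'ne, hx'U⟩))
    refine ⟨x', hx'T, ?_⟩
    have : T.filter (· < x') = insert t0 (T.filter (· < x)) := by
      ext s
      simp only [Finset.mem_filter, Finset.mem_insert]
      constructor
      · rintro ⟨hs, h⟩
        rcases (key s hs).1 h with h1 | h1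
        · exact Or.inl h1
        · exact Or.inr ⟨hs, h1⟩
      · rintro (rfl | ⟨hs, h⟩)
        · exact ⟨ht0T, ht0x'⟩
        · exact ⟨hs, (key s hs).2 (Or.inr h)⟩
    rw [this, Finset.card_insert_of_notMem, hcard]
    simp only [Finset.mem_filter, not_and, not_lt]
    intro _
    exact hxt0.le

/-- rank characterization of being below a point not in the range. -/
lemma rank_lt_iff {ι : Type*} [Fintype ι] (u : ι → ℝ) (x : ℝ) (hx : ∀ k, u k ≠ x) (k : ι) :
    u k < x ↔ (univ.filter fun l => u l < u k).card < (univ.filter fun l => u l < x).card := by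
  constructor
  · intro h
    apply Finset.card_lt_card
    rw [Finset.ssubset_iff_of_subset]
    · exact ⟨k, by simp [h], by simp⟩
    · intro l hl
      simp only [Finset.mem_filter, Finset.mem_univ, true_and] at hl ⊢
      exact hl.trans h
  · intro h
    by_contra h'
    have hxk : x < u k := lt_of_le_of_ne (not_lt.1 h') (Ne.symm (hx k))
    have : (univ.filter fun l => u l < x) ⊆ (univ.filter fun l => u l < u k) := by
      intro l hl
      simp only [Finset.mem_filter, Finset.mem_univ, true_and] at hl ⊢
      exact hl.trans hxk
    exact absurd (Finset.card_le_card this) (not_le.2 h)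

lemma order_determined {ι : Type*} [Fintype ι] {u u' : ι → ℝ} {x x' : ℝ}
    (hx : ∀ k, u k ≠ x) (hx' : ∀ k, u' k ≠ x')
    (ho : ∀ k l, u k < u l ↔ u' k < u' l)
    (hc : (univ.filter fun k => u k < x).card = (univ.filter fun k => u' k < x').card) :
    ∀ k, u k < x ↔ u' k < x' := by
  intro k
  rw [rank_lt_iff u x hx k, rank_lt_iff u' x' hx' k, hc]
  have : (univ.filter fun l => u l < u k) = (univ.filter fun l => u' l < u' k) := by
    apply Finset.filter_congr
    intro l _
    simpa using ho l k
  rw [this]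

lemma flip_iff {a b a' b' : ℝ} (hab : a ≠ b) (hab' : a' ≠ b') (h : b < a ↔ b' < a') :
    a < b ↔ a' < b' := by
  constructor
  · intro h1
    rcases hab'.lt_or_gt with h2 | h2
    · exact h2
    · exact absurd (h.2 h2) (not_lt.2 h1.le)
  · intro h1
    rcases hab.lt_or_gt with h2 | h2
    · exact h2
    · exact absurd (h.1 h2) (not_lt.2 h1.le)

section CellAux

lemma convex_comb_pos {a b x y : ℝ} (ha : 0 ≤ a) (hb : 0 ≤ b) (hab : a + b = 1)
    (hx : 0 < x) (hy : 0 < y) : 0 < a * x + b * y := by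
  rcases ha.eq_or_lt with h | h
  · have hb1 : b = 1 := by linarith
    rw [← h, hb1]; linarith
  · have h1 : 0 < a * x := mul_pos h hx
    have h2 : 0 ≤ b * y := mul_nonneg hb hy.le
    linarith

lemma convex_comb_neg {a b x y : ℝ} (ha : 0 ≤ a) (hb : 0 ≤ b) (hab : a + b = 1)
    (hx : x < 0) (hy : y < 0) : a * x + b * y < 0 := by
  have := convex_comb_pos ha hb hab (neg_pos.2 hx) (neg_pos.2 hy)
  linarith

def cell (A : Set (V →ₗ[ℝ] ℝ)) (w : V) : Set V :=
  {v ∈ arrCompl A | ∀ f ∈ A, (0 < f v ↔ 0 < f w)}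

lemma mem_cell_self {A : Set (V →ₗ[ℝ] ℝ)} {w : V} (hw : w ∈ arrCompl A) : w ∈ cell A w :=
  ⟨hw, fun _ _ => Iff.rfl⟩

lemma cell_convex (A : Set (V →ₗ[ℝ] ℝ)) (w : V) : Convex ℝ (cell A w) := by
  intro v₁ h₁ v₂ h₂ a b ha hb hab
  constructor
  · intro f hf
    have e : f (a • v₁ + b • v₂) = a * f v₁ + b * f v₂ := by
      simp [map_add, map_smul, smul_eq_mul]
    by_cases hs : 0 < f w
    · have p1 : 0 < f v₁ := (h₁.2 f hf).2 hs
      have p2 : 0 < f v₂ := (h₂.2 f hf).2 hs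
      have : 0 < a * f v₁ + b * f v₂ := convex_comb_pos ha hb hab p1 p2
      rw [e]; exact ne_of_gt this
    · have p1 : f v₁ < 0 := lt_of_le_of_ne (not_lt.1 (fun h => hs ((h₁.2 f hf).1 h))) (h₁.1 f hf)
      have p2 : f v₂ < 0 := lt_of_le_of_ne (not_lt.1 (fun h => hs ((h₂.2 f hf).1 h))) (h₂.1 f hf)
      have : a * f v₁ + b * f v₂ < 0 := convex_comb_neg ha hb hab p1 p2
      rw [e]; exact ne_of_lt this
  · intro f hf
    have e : f (a • v₁ + b • v₂) = a * f v₁ + b * f v₂ := by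
      simp [map_add, map_smul, smul_eq_mul]
    by_cases hs : 0 < f w
    · have p1 : 0 < f v₁ := (h₁.2 f hf).2 hs
      have p2 : 0 < f v₂ := (h₂.2 f hf).2 hs
      have : 0 < a * f v₁ + b * f v₂ := convex_comb_pos ha hb hab p1 p2
      simp only [e]
      exact iff_of_true this hs
    · have p1 : f v₁ < 0 := lt_of_le_of_ne (not_lt.1 (fun h => hs ((h₁.2 f hf).1 h))) (h₁.1 f hf)
      have p2 : f v₂ < 0 := lt_of_le_of_ne (not_lt.1 (fun h => hs ((h₂.2 f hf).1 h))) (h₂.1 f hf)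
      have : a * f v₁ + b * f v₂ < 0 := convex_comb_neg ha hb hab p1 p2
      simp only [e]
      exact iff_of_false (not_lt.2 this.le) hs

variable [IsTopologicalAddGroup V] [ContinuousSMul ℝ V] [T2Space V] [FiniteDimensional ℝ V]

lemma connectedComponentIn_eq_cell (A : Set (V →ₗ[ℝ] ℝ)) {w : V} (hw : w ∈ arrCompl A) :
    connectedComponentIn (arrCompl A) w = cell A w := by
  apply Set.Subset.antisymm
  · intro v hv
    have hsub : connectedComponentIn (arrCompl A) w ⊆ arrCompl A := connectedComponentIn_subset _ _
    refine ⟨hsub hv, ?_⟩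
    intro f hf
    have hcont : Continuous f := f.continuous_of_finiteDimensional
    have hopen1 : IsOpen {v : V | 0 < f v} := isOpen_lt continuous_const hcont
    have hopen2 : IsOpen {v : V | f v < 0} := isOpen_lt hcont continuous_const
    have hdisj : Disjoint {v : V | 0 < f v} {v : V | f v < 0} := by
      rw [Set.disjoint_left]
      intro x hx1 hx2
      simp only [Set.mem_setOf_eq] at hx1 hx2
      exact absurd (hx1.trans hx2) (lt_irrefl 0)
    have hunion : connectedComponentIn (arrCompl A) w ⊆ {v : V | 0 < f v} ∪ {v : V | f v < 0} := by
      intro x hx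
      rcases (hsub hx f hf).lt_or_gt with h | h
      · exact Or.inr h
      · exact Or.inl h
    have hpre : IsPreconnected (connectedComponentIn (arrCompl A) w) :=
      (isPreconnected_connectedComponentIn)
    rcases hpre.subset_or_subset hopen1 hopen2 hdisj hunion with h | h
    · exact iff_of_true (h hv) (h (mem_connectedComponentIn hw))
    · exact iff_of_false (not_lt.2 (h hv).le) (not_lt.2 (h (mem_connectedComponentIn hw)).le)
  · exact (cell_convex A w).isPreconnected.subset_connectedComponentIn
      (mem_cell_self hw) (fun v hv => hv.1)

lemma cell_congr {A : Set (V →ₗ[ℝ] ℝ)} {w w' : V}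
    (h : ∀ f ∈ A, (0 < f w ↔ 0 < f w')) : cell A w = cell A w' := by
  ext v
  exact ⟨fun hv => ⟨hv.1, fun f hf => (hv.2 f hf).trans (h f hf)⟩,
    fun hv => ⟨hv.1, fun f hf => (hv.2 f hf).trans (h f hf).symm⟩⟩

lemma separates_cell_iff {A : Set (V →ₗ[ℝ] ℝ)} {b c : V}
    (hb : b ∈ arrCompl A) (hc : c ∈ arrCompl A) {f : V →ₗ[ℝ] ℝ} (hf : f ∈ A) :
    Separates f (cell A b) (cell A c) ↔ ¬(0 < f b ↔ 0 < f c) := by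
  constructor
  · rintro (⟨h1, h2⟩ | ⟨h1, h2⟩) hiff
    · exact absurd (hiff.2 (h2 c (mem_cell_self hc))) (not_lt.2 (h1 b (mem_cell_self hb)).le)
    · exact absurd (hiff.1 (h1 b (mem_cell_self hb))) (not_lt.2 (h2 c (mem_cell_self hc)).le)
  · intro h
    by_cases hbpos : 0 < f b
    · have hcneg : ¬ 0 < f c := fun hcpos => h (iff_of_true hbpos hcpos)
      refine Or.inr ⟨fun v hv => (hv.2 f hf).2 hbpos, fun v hv => ?_⟩
      exact lt_of_le_of_ne (not_lt.1 fun hp => hcneg ((hv.2 f hf).1 hp)) (hv.1 f hf)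
    · have hcpos : 0 < f c := by
        rcases (hc f hf).lt_or_gt with h' | h'
        · exact absurd (iff_of_false hbpos (not_lt.2 h'.le)) h
        · exact h'
      refine Or.inl ⟨fun v hv => ?_, fun v hv => (hv.2 f hf).2 hcpos⟩
      exact lt_of_le_of_ne (not_lt.1 fun hp => hbpos ((hv.2 f hf).1 hp)) (hv.1 f hf)


end CellAux

namespace IshDev

variable (n : ℕ) (N : Fin n → Finset ℝ)

abbrev W := Option (Fin (n + 1)) → ℝ

/-- index type for hyperplanes "at level i" -/
def Ki (i : Fin n) : Type := {j : Fin n // i < j} ⊕ {a : ℝ // a ∈ N i}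

instance (i : Fin n) : Fintype (Ki n N i) := by unfold Ki; infer_instance

/-- the index type of all hyperplanes -/
def J : Type := Unit ⊕ (Σ i : Fin n, Ki n N i)

instance : Fintype (J n N) := by unfold J; infer_instance

/-- parametrization of the linear forms -/
def Phi : J n N → (W n →ₗ[ℝ] ℝ)
  | .inl _ => pr none
  | .inr ⟨i, .inl j⟩ => pr (some i.succ) - pr (some j.1.succ)
  | .inr ⟨i, .inr a⟩ => pr (some 0) - pr (some i.succ) - a.1 • pr none

lemma Phi_apply_inl (u : Unit) (v : W n) : Phi n N (.inl u) v = v none := rfl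

lemma Phi_apply_pair (i : Fin n) (j : {j : Fin n // i < j}) (v : W n) :
    Phi n N (.inr ⟨i, .inl j⟩) v = v (some i.succ) - v (some j.1.succ) := rfl

lemma Phi_apply_aff (i : Fin n) (a : {a : ℝ // a ∈ N i}) (v : W n) :
    Phi n N (.inr ⟨i, .inr a⟩) v = v (some 0) - v (some i.succ) - a.1 * v none := rfl

lemma range_Phi : Set.range (Phi n N) = coneIshLin n N := by
  ext f
  constructor
  · rintro ⟨e, rfl⟩
    match e with
    | .inl u => exact Or.inl (Or.inl rfl)
    | .inr ⟨i, .inl j⟩ => exact Or.inl (Or.inr ⟨i, j.1, j.2, rfl⟩)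
    | .inr ⟨i, .inr a⟩ => exact Or.inr ⟨i, a.1, a.2, rfl⟩
  · rintro ((h | ⟨i, j, hij, rfl⟩) | ⟨i, a, ha, rfl⟩)
    · exact ⟨.inl (), h.symm⟩
    · exact ⟨.inr ⟨i, .inl ⟨j, hij⟩⟩, rfl⟩
    · exact ⟨.inr ⟨i, .inr ⟨a, ha⟩⟩, rfl⟩

/-- basis vector -/
def δ (o : Option (Fin (n + 1))) : W n := Pi.single o 1

lemma pr_delta (o o' : Option (Fin (n + 1))) : pr o' (δ n o) = if o' = o then 1 else 0 := by
  simp [pr, δ, LinearMap.proj_apply, Pi.single_apply]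

lemma Phi_injective : Function.Injective (Phi n N) := by
  intro e e' h
  have hv : ∀ v, Phi n N e v = Phi n N e' v := fun v => by rw [h]
  match e, e' with
  | .inl u, .inl u' => rfl
  | .inl u, .inr ⟨i, .inl j⟩ =>
    exfalso
    have := hv (δ n none)
    simp [Phi_apply_inl, Phi_apply_pair, δ, Pi.single_apply] at this
  | .inl u, .inr ⟨i, .inr a⟩ =>
    exfalso
    have := hv (δ n (some 0))
    simp [Phi_apply_inl, Phi_apply_aff, δ, Pi.single_apply, Fin.succ_ne_zero] at this
  | .inr ⟨i, .inl j⟩, .inl u =>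
    exfalso
    have := hv (δ n none)
    simp [Phi_apply_inl, Phi_apply_pair, δ, Pi.single_apply] at this
  | .inr ⟨i, .inr a⟩, .inl u =>
    exfalso
    have := hv (δ n (some 0))
    simp [Phi_apply_inl, Phi_apply_aff, δ, Pi.single_apply, Fin.succ_ne_zero] at this
  | .inr ⟨i, .inl j⟩, .inr ⟨i', .inr a⟩ =>
    exfalso
    have := hv (δ n (some 0))
    simp [Phi_apply_pair, Phi_apply_aff, δ, Pi.single_apply, Fin.succ_ne_zero] at this
  | .inr ⟨i, .inr a⟩, .inr ⟨i', .inl j⟩ =>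
    exfalso
    have := hv (δ n (some 0))
    simp [Phi_apply_pair, Phi_apply_aff, δ, Pi.single_apply, Fin.succ_ne_zero] at this
  | .inr ⟨i, .inl j⟩, .inr ⟨i', .inl j'⟩ =>
    have h1 := hv (δ n (some i.succ))
    have h2 := hv (δ n (some j.1.succ))
    have hij : i ≠ j.1 := ne_of_lt j.2
    have hij' : i' ≠ j'.1 := ne_of_lt j'.2
    simp only [Phi_apply_pair, δ, Pi.single_apply, Option.some.injEq, Fin.succ_inj,
      if_pos rfl, if_true] at h1 h2
    have hii' : i' = i := by
      by_contra hc
      by_cases he : (j.1 : Fin n) = i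
      · exact hij he.symm
      · by_cases hd : (j'.1 : Fin n) = i
        · simp only [if_neg hc, if_pos hd, if_neg he] at h1; norm_num at h1
        · simp only [if_neg hc, if_neg hd, if_neg he] at h1; norm_num at h1
    subst hii'
    have hjj' : j'.1 = j.1 := by
      by_contra hc
      simp only [if_neg hij, if_neg hc] at h2
      norm_num at h2
    have : j = j' := Subtype.ext hjj'.symm
    rw [this]
  | .inr ⟨i, .inr a⟩, .inr ⟨i', .inr a'⟩ =>
    have h1 := hv (δ n (some i.succ))
    have h2 := hv (δ n none)
    have hz : ∀ k : Fin n, ¬ ((0 : Fin (n+1)) = k.succ) := fun k hk => Fin.succ_ne_zero k hk.symm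
    simp only [Phi_apply_aff, δ, Pi.single_apply, Option.some.injEq, Fin.succ_inj,
      reduceCtorEq, if_pos rfl, if_true, if_false, if_neg (hz _)] at h1 h2
    have hii' : i' = i := by
      by_contra hc
      simp only [if_neg hc] at h1
      norm_num at h1
    subst hii'
    have haa' : a.1 = a'.1 := by
      norm_num at h2
      exact congrArg Subtype.val h2
    have : a = a' := Subtype.ext haa'
    rw [this]


section PointVals

variable (n : ℕ) (N : Fin n → Finset ℝ)

def sg (w : W n) : ℝ := w none * |w none|⁻¹

def yv (w : W n) (i : Fin n) : ℝ := (w (some i.succ) - w (some 0)) * |w none|⁻¹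

def cst (w : W n) (a : ℝ) : ℝ := -a * sg n w

def val (w : W n) (i : Fin n) : Ki n N i → ℝ :=
  Sum.elim (fun j => yv n w j.1) (fun a => cst n w a.1)

def pcount (w : W n) (i : Fin n) : ℕ :=
  (univ.filter fun k : Ki n N i => val n N w i k < yv n w i).card

variable {n N} {w : W n}

lemma habs (hz : w none ≠ 0) : 0 < |w none|⁻¹ := by positivity

lemma yv_lt_yv (hz : w none ≠ 0) {i j : Fin n} :
    yv n w i < yv n w j ↔ w (some i.succ) < w (some j.succ) := by
  unfold yv
  rw [mul_lt_mul_iff_of_pos_right (habs hz)]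
  exact sub_lt_sub_iff_right _

lemma yv_inj (hz : w none ≠ 0) {i j : Fin n} (h : yv n w i = yv n w j) :
    w (some i.succ) = w (some j.succ) := by
  unfold yv at h
  have := mul_right_cancel₀ (ne_of_gt (habs hz)) h
  linarith

lemma sg_eq_one (h : 0 < w none) : sg n w = 1 := by
  unfold sg
  rw [abs_of_pos h, mul_inv_cancel₀ (ne_of_gt h)]

lemma sg_eq_neg_one (h : w none < 0) : sg n w = -1 := by
  unfold sg
  rw [abs_of_neg h, inv_neg, mul_neg, mul_inv_cancel₀ (ne_of_lt h)]

lemma pos_pair_iff (hz : w none ≠ 0) (i : Fin n) (j : {j : Fin n // i < j}) :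
    0 < Phi n N (.inr ⟨i, .inl j⟩) w ↔ yv n w j.1 < yv n w i := by
  rw [Phi_apply_pair, yv_lt_yv hz, sub_pos]

lemma pos_aff_iff (hz : w none ≠ 0) (i : Fin n) (a : {a : ℝ // a ∈ N i}) :
    0 < Phi n N (.inr ⟨i, .inr a⟩) w ↔ yv n w i < cst n w a.1 := by
  rw [Phi_apply_aff]
  unfold yv cst sg
  rw [show -(a.1 : ℝ) * (w none * |w none|⁻¹) = (-a.1 * w none) * |w none|⁻¹ by ring,
    mul_lt_mul_iff_of_pos_right (habs hz)]
  constructor <;> intro h <;> linarith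

lemma neg_aff_iff (hz : w none ≠ 0) (i : Fin n) (a : {a : ℝ // a ∈ N i}) :
    Phi n N (.inr ⟨i, .inr a⟩) w < 0 ↔ cst n w a.1 < yv n w i := by
  rw [Phi_apply_aff]
  unfold yv cst sg
  rw [show -(a.1 : ℝ) * (w none * |w none|⁻¹) = (-a.1 * w none) * |w none|⁻¹ by ring,
    mul_lt_mul_iff_of_pos_right (habs hz)]
  constructor <;> intro h <;> linarith

variable (hw : w ∈ arrCompl (Set.range (Phi n N)))

lemma wz_ne (hw : w ∈ arrCompl (Set.range (Phi n N))) : w none ≠ 0 :=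
  hw _ ⟨.inl (), rfl⟩

lemma val_ne (hw : w ∈ arrCompl (Set.range (Phi n N))) (i : Fin n) (k : Ki n N i) :
    val n N w i k ≠ yv n w i := by
  have hz := wz_ne hw
  match k with
  | .inl j =>
    intro h
    have h2 := yv_inj hz h
    have h3 : Phi n N (.inr ⟨i, .inl j⟩) w ≠ 0 := hw _ ⟨_, rfl⟩
    rw [Phi_apply_pair] at h3
    exact h3 (by rw [h2]; ring)
  | .inr a =>
    intro h
    have h3 : Phi n N (.inr ⟨i, .inr a⟩) w ≠ 0 := hw _ ⟨_, rfl⟩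
    rcases h3.lt_or_gt with h4 | h4
    · rw [neg_aff_iff hz] at h4
      simp only [val, Sum.elim_inr] at h
      exact absurd h4 (not_lt.2 h.ge)
    · rw [pos_aff_iff hz] at h4
      simp only [val, Sum.elim_inr] at h
      exact absurd h4 (not_lt.2 h.le)

lemma neg_iff_neg {x y : ℝ} (hx : x ≠ 0) (hy : y ≠ 0) (h : 0 < x ↔ 0 < y) :
    x < 0 ↔ y < 0 := by
  constructor
  · intro h1
    rcases hy.lt_or_gt with h2 | h2
    · exact h2
    · exact absurd (h.2 h2) (not_lt.2 h1.le)
  · intro h1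
    rcases hx.lt_or_gt with h2 | h2
    · exact h2
    · exact absurd (h.1 h2) (not_lt.2 h1.le)

theorem signs_eq (hN : ∀ i j : Fin n, i ≤ j → N i ⊆ N j)
    {w w' : W n} (hw : w ∈ arrCompl (Set.range (Phi n N)))
    (hw' : w' ∈ arrCompl (Set.range (Phi n N)))
    (hz : 0 < w none ↔ 0 < w' none)
    (hp : ∀ i, pcount n N w i = pcount n N w' i) :
    ∀ e, (0 < Phi n N e w ↔ 0 < Phi n N e w') := by
  have hwz := wz_ne hw
  have hw'z := wz_ne hw'
  have hsg : sg n w = sg n w' := by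
    by_cases h : 0 < w none
    · rw [sg_eq_one h, sg_eq_one (hz.1 h)]
    · have h1 : w none < 0 := lt_of_le_of_ne (not_lt.1 h) hwz
      have h2 : w' none < 0 := lt_of_le_of_ne (not_lt.1 fun hh => h (hz.2 hh)) hw'z
      rw [sg_eq_neg_one h1, sg_eq_neg_one h2]
  have hcst : ∀ a : ℝ, cst n w a = cst n w' a := fun a => by unfold cst; rw [hsg]
  set Agr : Fin n → Prop :=
    fun i => ∀ k : Ki n N i, (val n N w i k < yv n w i ↔ val n N w' i k < yv n w' i) with hAgrdef
  have key : ∀ m : ℕ, ∀ i : Fin n, n - i.1 ≤ m → Agr i := by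
    intro m
    induction m with
    | zero => intro i hi; exact absurd hi (by have := i.isLt; omega)
    | succ m ih =>
      intro i hi
      have hAbove : ∀ j : Fin n, i < j → Agr j := by
        intro j hj
        have hj' : i.1 < j.1 := hj
        exact ih j (by have := j.isLt; omega)
      have ho : ∀ k l : Ki n N i,
          (val n N w i k < val n N w i l ↔ val n N w' i k < val n N w' i l) := by
        intro k l
        match k, l with
        | .inl j, .inl j' =>
          simp only [val, Sum.elim_inl]
          rcases lt_trichotomy j.1 j'.1 with hlt | heq | hgt
          · have h1 := hAbove j.1 j.2 (.inl ⟨j'.1, hlt⟩)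
            simp only [val, Sum.elim_inl] at h1
            refine flip_iff ?_ ?_ h1
            · exact fun h => (val_ne hw j.1 (.inl ⟨j'.1, hlt⟩)) (by simpa [val] using h.symm)
            · exact fun h => (val_ne hw' j.1 (.inl ⟨j'.1, hlt⟩)) (by simpa [val] using h.symm)
          · rw [heq]
            exact iff_of_false (lt_irrefl _) (lt_irrefl _)
          · have h1 := hAbove j'.1 j'.2 (.inl ⟨j.1, hgt⟩)
            simpa only [val, Sum.elim_inl] using h1
        | .inl j, .inr a =>
          have haj : a.1 ∈ N j.1 := hN i j.1 (le_of_lt j.2) a.2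
          have h1 := hAbove j.1 j.2 (.inr ⟨a.1, haj⟩)
          simp only [val, Sum.elim_inl, Sum.elim_inr] at h1 ⊢
          refine flip_iff ?_ ?_ h1
          · exact fun h => (val_ne hw j.1 (.inr ⟨a.1, haj⟩)) (by simpa [val] using h.symm)
          · exact fun h => (val_ne hw' j.1 (.inr ⟨a.1, haj⟩)) (by simpa [val] using h.symm)
        | .inr a, .inl j =>
          have haj : a.1 ∈ N j.1 := hN i j.1 (le_of_lt j.2) a.2
          have h1 := hAbove j.1 j.2 (.inr ⟨a.1, haj⟩)
          simpa only [val, Sum.elim_inl, Sum.elim_inr] using h1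
        | .inr a, .inr b =>
          simp only [val, Sum.elim_inr]
          rw [hcst, hcst]
      exact order_determined (val_ne hw i) (val_ne hw' i) ho (hp i)
  have hAgr : ∀ i, Agr i := fun i => key n i (by omega)
  intro e
  match e with
  | .inl u => exact hz
  | .inr ⟨i, .inl j⟩ =>
    rw [pos_pair_iff hwz, pos_pair_iff hw'z]
    have := hAgr i (.inl j)
    simpa only [val, Sum.elim_inl] using this
  | .inr ⟨i, .inr a⟩ =>
    rw [pos_aff_iff hwz, pos_aff_iff hw'z]
    have h1 := hAgr i (.inr a)
    simp only [val, Sum.elim_inr] at h1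
    refine flip_iff ?_ ?_ h1
    · exact fun h => (val_ne hw i (.inr a)) (by simpa [val] using h.symm)
    · exact fun h => (val_ne hw' i (.inr a)) (by simpa [val] using h.symm)

theorem pcount_eq_of_signs {w w' : W n}
    (hw : w ∈ arrCompl (Set.range (Phi n N)))
    (hw' : w' ∈ arrCompl (Set.range (Phi n N)))
    (hs : ∀ e, (0 < Phi n N e w ↔ 0 < Phi n N e w')) (i : Fin n) :
    pcount n N w i = pcount n N w' i := by
  have hwz := wz_ne hw
  have hw'z := wz_ne hw'
  unfold pcount
  congr 1
  apply Finset.filter_congr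
  intro k _
  match k with
  | .inl j =>
    simp only [val, Sum.elim_inl]
    rw [← pos_pair_iff hwz i j, ← pos_pair_iff hw'z i j]
    exact hs _
  | .inr a =>
    simp only [val, Sum.elim_inr]
    rw [← neg_aff_iff hwz i a, ← neg_aff_iff hw'z i a]
    exact neg_iff_neg (hw _ ⟨_, rfl⟩) (hw' _ ⟨_, rfl⟩) (hs _)

end PointVals

section Construction

variable (n : ℕ) (N : Fin n → Finset ℝ) (ε : ℝ) (p : Fin n → ℕ)

def Yfun (i : Fin n) : ℝ :=
  let S : Finset ℝ := (univ : Finset (Ki n N i)).image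
    (Sum.elim (fun j => Yfun j.1) (fun a => -(a.1 * ε)))
  Classical.choose (exists_rank_point S (min (p i) S.card) (min_le_right _ _))
termination_by n - i.1
decreasing_by
  have h1 : (i : ℕ) < j.1 := j.2
  have h2 := j.1.isLt
  omega

def Sof (i : Fin n) : Finset ℝ := (univ : Finset (Ki n N i)).image
    (Sum.elim (fun j => Yfun n N ε p j.1) (fun a => -(a.1 * ε)))

lemma Yfun_spec (i : Fin n) : Yfun n N ε p i ∉ Sof n N ε p i ∧
    ((Sof n N ε p i).filter (· < Yfun n N ε p i)).card = min (p i) (Sof n N ε p i).card := by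
  have he : Yfun n N ε p i = Classical.choose (exists_rank_point (Sof n N ε p i)
      (min (p i) (Sof n N ε p i).card) (min_le_right _ _)) := by
    rw [Yfun]
    rfl
  rw [he]
  exact Classical.choose_spec (exists_rank_point (Sof n N ε p i)
    (min (p i) (Sof n N ε p i).card) (min_le_right _ _))

variable {n N ε p}

lemma Y_ne_gt {i j : Fin n} (h : i < j) : Yfun n N ε p i ≠ Yfun n N ε p j := by
  intro he
  exact (Yfun_spec n N ε p i).1 (he ▸ Finset.mem_image.2 ⟨.inl ⟨j, h⟩, mem_univ _, rfl⟩)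

lemma Y_ne_cst {j : Fin n} {a : ℝ} (ha : a ∈ N j) : Yfun n N ε p j ≠ -(a * ε) := by
  intro he
  exact (Yfun_spec n N ε p j).1 (he ▸ Finset.mem_image.2 ⟨.inr ⟨a, ha⟩, mem_univ _, rfl⟩)

lemma val_inj (hε : ε ≠ 0) (hN : ∀ i j : Fin n, i ≤ j → N i ⊆ N j) (i : Fin n) :
    Function.Injective
      (Sum.elim (fun j : {j : Fin n // i < j} => Yfun n N ε p j.1)
        (fun a : {a : ℝ // a ∈ N i} => -(a.1 * ε))) := by
  intro k l h
  match k, l with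
  | .inl j, .inl j' =>
    simp only [Sum.elim_inl] at h
    rcases lt_trichotomy j.1 j'.1 with hlt | heq | hgt
    · exact absurd h (Y_ne_gt hlt)
    · exact congrArg Sum.inl (Subtype.ext heq)
    · exact absurd h.symm (Y_ne_gt hgt)
  | .inl j, .inr a =>
    simp only [Sum.elim_inl, Sum.elim_inr] at h
    exact absurd h (Y_ne_cst (hN i j.1 (le_of_lt j.2) a.2))
  | .inr a, .inl j =>
    simp only [Sum.elim_inl, Sum.elim_inr] at h
    exact absurd h.symm (Y_ne_cst (hN i j.1 (le_of_lt j.2) a.2))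
  | .inr a, .inr b =>
    simp only [Sum.elim_inr, neg_inj] at h
    exact congrArg Sum.inr (Subtype.ext (mul_right_cancel₀ hε h))

end Construction

/-- the "capacity" of index i -/
def ecap (n : ℕ) (N : Fin n → Finset ℝ) (i : Fin n) : ℕ := (N i).card + (n - 1 - i.1)

lemma card_Ki (n : ℕ) (N : Fin n → Finset ℝ) (i : Fin n) :
    Fintype.card (Ki n N i) = ecap n N i := by
  show Fintype.card ({j : Fin n // i < j} ⊕ {a : ℝ // a ∈ N i}) = _
  rw [Fintype.card_sum, ecap, add_comm]
  congr 1
  · exact Fintype.card_coe _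
  · rw [Fintype.card_subtype]
    have : (univ.filter fun j : Fin n => i < j) = Finset.Ioi i := by
      ext j; simp [Finset.mem_Ioi]
    rw [this, Fin.card_Ioi]

section Construction2
variable {n : ℕ} {N : Fin n → Finset ℝ} {ε : ℝ} {p : Fin n → ℕ}

lemma Sof_card (hε : ε ≠ 0) (hN : ∀ i j : Fin n, i ≤ j → N i ⊆ N j) (i : Fin n) :
    (Sof n N ε p i).card = ecap n N i := by
  rw [Sof]
  exact (Finset.card_image_of_injective (univ : Finset (Ki n N i)) (val_inj hε hN i)).trans
    (card_univ.trans (card_Ki n N i))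

end Construction2

section Point

variable (n : ℕ) (N : Fin n → Finset ℝ) (b : Bool) (p : Fin n → ℕ)

def epsb : ℝ := if b then 1 else -1

lemma epsb_ne : epsb b ≠ 0 := by unfold epsb; split_ifs <;> norm_num

lemma abs_epsb : |epsb b| = 1 := by unfold epsb; split_ifs <;> norm_num

def ptv : W n := fun o =>
  match o with
  | none => epsb b
  | some k => Fin.cases (motive := fun _ => ℝ) 0 (fun i => Yfun n N (epsb b) p i) k

lemma ptv_none : ptv n N b p none = epsb b := rfl
lemma ptv_zero : ptv n N b p (some 0) = 0 := rfl
lemma ptv_succ (i : Fin n) : ptv n N b p (some i.succ) = Yfun n N (epsb b) p i := by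
  show Fin.cases (motive := fun _ => ℝ) 0 (fun i => Yfun n N (epsb b) p i) i.succ = _
  rw [Fin.cases_succ]

variable {n N b p}
variable (hN : ∀ i j : Fin n, i ≤ j → N i ⊆ N j)

lemma ptv_mem (hN : ∀ i j : Fin n, i ≤ j → N i ⊆ N j) :
    ptv n N b p ∈ arrCompl (Set.range (Phi n N)) := by
  rintro f ⟨e, rfl⟩
  match e with
  | .inl u =>
    rw [Phi_apply_inl, ptv_none]
    exact epsb_ne b
  | .inr ⟨i, .inl j⟩ =>
    rw [Phi_apply_pair, ptv_succ, ptv_succ]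
    exact sub_ne_zero.2 (Y_ne_gt j.2)
  | .inr ⟨i, .inr a⟩ =>
    rw [Phi_apply_aff, ptv_succ, ptv_zero, ptv_none]
    intro h
    exact Y_ne_cst a.2 (by linarith)

lemma sg_ptv : sg n (ptv n N b p) = epsb b := by
  unfold sg
  rw [ptv_none, abs_epsb]
  simp

lemma yv_ptv (i : Fin n) : yv n (ptv n N b p) i = Yfun n N (epsb b) p i := by
  unfold yv
  rw [ptv_none, ptv_succ, ptv_zero, abs_epsb]
  simp

lemma cst_ptv (a : ℝ) : cst n (ptv n N b p) a = -(a * epsb b) := by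
  unfold cst
  rw [sg_ptv]
  ring

lemma val_ptv (i : Fin n) (k : Ki n N i) :
    val n N (ptv n N b p) i k =
      Sum.elim (fun j : {j : Fin n // i < j} => Yfun n N (epsb b) p j.1)
        (fun a : {a : ℝ // a ∈ N i} => -(a.1 * epsb b)) k := by
  match k with
  | .inl j => simp only [val, Sum.elim_inl, yv_ptv]
  | .inr a => simp only [val, Sum.elim_inr, cst_ptv]

lemma pcount_ptv (hN : ∀ i j : Fin n, i ≤ j → N i ⊆ N j) (hp : ∀ i, p i ≤ ecap n N i)
    (i : Fin n) : pcount n N (ptv n N b p) i = p i := by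
  unfold pcount
  have h1 : (univ.filter fun k : Ki n N i => val n N (ptv n N b p) i k < yv n (ptv n N b p) i)
      = (univ.filter fun k : Ki n N i =>
        (Sum.elim (fun j : {j : Fin n // i < j} => Yfun n N (epsb b) p j.1)
          (fun a : {a : ℝ // a ∈ N i} => -(a.1 * epsb b))) k < Yfun n N (epsb b) p i) := by
    apply Finset.filter_congr
    intro k _
    rw [val_ptv, yv_ptv]
  rw [h1]
  have h2 : ((Sof n N (epsb b) p i).filter (· < Yfun n N (epsb b) p i)).card
      = (univ.filter fun k : Ki n N i =>
        (Sum.elim (fun j : {j : Fin n // i < j} => Yfun n N (epsb b) p j.1)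
          (fun a : {a : ℝ // a ∈ N i} => -(a.1 * epsb b))) k < Yfun n N (epsb b) p i).card := by
    rw [Sof]
    exact (congrArg Finset.card Finset.filter_image).trans
      (Finset.card_image_of_injective _ (val_inj (epsb_ne b) hN i))
  rw [← h2, (Yfun_spec n N (epsb b) p i).2, Sof_card (epsb_ne b) hN i]
  exact min_eq_left (hp i)

end Point

section Assembly

variable {n : ℕ} {N : Fin n → Finset ℝ}

/-- index of chambers -/
abbrev Q (n : ℕ) (N : Fin n → Finset ℝ) : Type := Bool × (∀ i : Fin n, Fin (ecap n N i + 1))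

/-- the chamber map -/
def gch (n : ℕ) (N : Fin n → Finset ℝ) (q : Q n N) : Set (W n) :=
  cell (Set.range (Phi n N)) (ptv n N q.1 (fun i => (q.2 i : ℕ)))

lemma epsb_pos_iff (b : Bool) : 0 < epsb b ↔ b = true := by
  cases b <;> simp [epsb] <;> norm_num

lemma pcount_le (w : W n) (i : Fin n) : pcount n N w i ≤ ecap n N i := by
  rw [pcount, ← card_Ki n N i, ← Finset.card_univ]
  exact Finset.card_filter_le _ _

lemma q2_le (q : Q n N) (i : Fin n) : (q.2 i : ℕ) ≤ ecap n N i := by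
  have := (q.2 i).isLt
  omega

lemma chambers_eq (hN : ∀ i j : Fin n, i ≤ j → N i ⊆ N j) : chambers (Set.range (Phi n N)) = Set.range (gch n N) := by
  apply Set.Subset.antisymm
  · rintro C ⟨x, hx, rfl⟩
    rw [connectedComponentIn_eq_cell _ hx]
    set b : Bool := if 0 < x none then true else false with hb
    set q2 : ∀ i : Fin n, Fin (ecap n N i + 1) :=
      fun i => ⟨pcount n N x i, Nat.lt_succ_of_le (pcount_le x i)⟩ with hq2
    refine ⟨(b, q2), ?_⟩
    have hmem := ptv_mem (b := b) (p := fun i => ((q2 i : ℕ))) hN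
    rw [gch]
    apply (cell_congr ?_).symm
    rintro f ⟨e, rfl⟩
    apply signs_eq hN hx hmem
    · rw [ptv_none]
      by_cases h : 0 < x none <;> simp [hb, epsb, h]
    · intro i
      rw [pcount_ptv hN (fun i => q2_le (b, q2) i)]
  · rintro C ⟨q, rfl⟩
    exact ⟨_, ptv_mem hN, (connectedComponentIn_eq_cell _ (ptv_mem hN)).symm⟩

lemma gch_inj (hN : ∀ i j : Fin n, i ≤ j → N i ⊆ N j) : Function.Injective (gch n N) := by
  intro q q' h
  have hmem := ptv_mem (b := q.1) (p := fun i => ((q.2 i : ℕ))) hN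
  have hmem' := ptv_mem (b := q'.1) (p := fun i => ((q'.2 i : ℕ))) hN
  have h1 : ptv n N q'.1 (fun i => (q'.2 i : ℕ)) ∈
      cell (Set.range (Phi n N)) (ptv n N q.1 (fun i => (q.2 i : ℕ))) := by
    rw [show cell (Set.range (Phi n N)) (ptv n N q.1 (fun i => (q.2 i : ℕ))) = gch n N q from rfl,
      h]
    exact mem_cell_self hmem'
  have hsign : ∀ e, (0 < Phi n N e (ptv n N q'.1 (fun i => (q'.2 i : ℕ))) ↔
      0 < Phi n N e (ptv n N q.1 (fun i => (q.2 i : ℕ)))) :=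
    fun e => h1.2 (Phi n N e) ⟨e, rfl⟩
  have hb : q'.1 = q.1 := by
    have hz := hsign (.inl ())
    rw [Phi_apply_inl, Phi_apply_inl, ptv_none, ptv_none] at hz
    rw [Bool.eq_iff_iff]
    exact (epsb_pos_iff _).symm.trans (hz.trans (epsb_pos_iff _))
  have hq : ∀ i, (q'.2 i : ℕ) = (q.2 i : ℕ) := by
    intro i
    have := pcount_eq_of_signs hmem' hmem hsign i
    rwa [pcount_ptv hN (fun i => q2_le q' i), pcount_ptv hN (fun i => q2_le q i)] at this
  rcases q with ⟨b, p⟩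
  rcases q' with ⟨b', p'⟩
  simp only at hb hq
  rw [Prod.ext_iff]
  exact ⟨hb.symm ▸ rfl, by funext i; exact (Fin.ext (hq i)).symm⟩

/-- base chamber index -/
def qB (n : ℕ) (N : Fin n → Finset ℝ) : Q n N := (true, fun i => 0)

lemma base_not_lt (hN : ∀ i j : Fin n, i ≤ j → N i ⊆ N j) (i : Fin n) (k : Ki n N i) :
    ¬ (val n N (ptv n N true (fun i => ((qB n N).2 i : ℕ))) i k <
        yv n (ptv n N true (fun i => ((qB n N).2 i : ℕ))) i) := by
  intro hlt
  have h0 : pcount n N (ptv n N true (fun i => ((qB n N).2 i : ℕ))) i = 0 :=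
    pcount_ptv hN (fun i => q2_le (qB n N) i) i
  rw [pcount, Finset.card_eq_zero] at h0
  have : k ∈ (univ.filter fun k : Ki n N i =>
      val n N (ptv n N true (fun i => ((qB n N).2 i : ℕ))) i k <
        yv n (ptv n N true (fun i => ((qB n N).2 i : ℕ))) i) := by
    simp [hlt]
  rw [h0] at this
  exact absurd this (Finset.notMem_empty k)

lemma sep_formula (hN : ∀ i j : Fin n, i ≤ j → N i ⊆ N j) (q : Q n N) :
    sepCount (Set.range (Phi n N)) (gch n N (qB n N)) (gch n N q) =
      (if q.1 then 0 else 1) + ∑ i : Fin n, (q.2 i : ℕ) := by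
  set w0 := ptv n N true (fun i => ((qB n N).2 i : ℕ)) with hw0
  set wq := ptv n N q.1 (fun i => (q.2 i : ℕ)) with hwq
  have hmem0 : w0 ∈ arrCompl (Set.range (Phi n N)) := ptv_mem hN
  have hmemq : wq ∈ arrCompl (Set.range (Phi n N)) := ptv_mem hN
  have hz0 : w0 none ≠ 0 := wz_ne hmem0
  have hzq : wq none ≠ 0 := wz_ne hmemq
  have himg : {f ∈ Set.range (Phi n N) | Separates f (gch n N (qB n N)) (gch n N q)}
      = Phi n N '' {e | Separates (Phi n N e) (gch n N (qB n N)) (gch n N q)} := by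
    ext f
    constructor
    · rintro ⟨⟨e, rfl⟩, hs⟩; exact ⟨e, hs, rfl⟩
    · rintro ⟨e, hs, rfl⟩; exact ⟨⟨e, rfl⟩, hs⟩
  rw [sepCount, himg, Set.ncard_image_of_injective _ (Phi_injective n N)]
  have hset : {e | Separates (Phi n N e) (gch n N (qB n N)) (gch n N q)} =
      ↑(univ.filter fun e => Separates (Phi n N e) (gch n N (qB n N)) (gch n N q)) := by
    ext e; simp
  rw [hset, Set.ncard_coe_finset]
  have hsep : ∀ e, (Separates (Phi n N e) (gch n N (qB n N)) (gch n N q) ↔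
      ¬ (0 < Phi n N e w0 ↔ 0 < Phi n N e wq)) := fun e =>
    separates_cell_iff hmem0 hmemq ⟨e, rfl⟩
  have hfc : (univ.filter fun e => Separates (Phi n N e) (gch n N (qB n N)) (gch n N q)) =
      (univ.filter fun e : J n N => ¬ (0 < Phi n N e w0 ↔ 0 < Phi n N e wq)) :=
    Finset.filter_congr (fun e _ => hsep e)
  rw [hfc, Finset.card_filter]
  show (∑ e : Unit ⊕ (Σ i : Fin n, Ki n N i),
      if ¬ (0 < Phi n N e w0 ↔ 0 < Phi n N e wq) then 1 else 0) = _
  rw [Fintype.sum_sum_type]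
  congr 1
  · -- Unit part
    have : ∀ u : Unit, (0 < Phi n N (.inl u) w0 ↔ 0 < Phi n N (.inl u) wq) ↔ (q.1 = true) := by
      intro u
      rw [Phi_apply_inl, Phi_apply_inl, hw0, hwq, ptv_none, ptv_none]
      cases hq : q.1 <;> simp [hq, epsb] <;> norm_num
    cases hq1 : q.1
    · simp [this, hq1]
    · simp [this, hq1]
  · -- sigma part
    have hterm : ∀ (i : Fin n) (k : Ki n N i),
        (if ¬ (0 < Phi n N (.inr ⟨i, k⟩) w0 ↔ 0 < Phi n N (.inr ⟨i, k⟩) wq) then 1 else 0)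
          = (if val n N wq i k < yv n wq i then 1 else 0) := by
      intro i k
      congr 1
      apply propext
      constructor
      · intro hflip
        by_contra hnot
        apply hflip
        match k with
        | .inl j =>
          rw [pos_pair_iff hz0, pos_pair_iff hzq]
          have hb := base_not_lt hN i (.inl j)
          simp only [val, Sum.elim_inl] at hb hnot
          exact iff_of_false hb hnot
        | .inr a =>
          rw [pos_aff_iff hz0, pos_aff_iff hzq]
          have hb := base_not_lt hN i (.inr a)
          simp only [val, Sum.elim_inr] at hb hnot
          have h0ne := val_ne hmem0 i (.inr a)
          have hqne := val_ne hmemq i (.inr a)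
          simp only [val, Sum.elim_inr] at h0ne hqne
          have h0lt : yv n w0 i < cst n w0 a.1 := lt_of_le_of_ne (not_lt.1 hb) (Ne.symm h0ne)
          have hqlt : yv n wq i < cst n wq a.1 := lt_of_le_of_ne (not_lt.1 hnot) (Ne.symm hqne)
          exact iff_of_true h0lt hqlt
      · intro hlt hiff
        match k with
        | .inl j =>
          rw [pos_pair_iff hz0, pos_pair_iff hzq] at hiff
          have hb := base_not_lt hN i (.inl j)
          simp only [val, Sum.elim_inl] at hb hlt
          exact hb (hiff.2 hlt)
        | .inr a =>
          rw [pos_aff_iff hz0, pos_aff_iff hzq] at hiff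
          have hb := base_not_lt hN i (.inr a)
          simp only [val, Sum.elim_inr] at hb hlt
          have h0ne := val_ne hmem0 i (.inr a)
          simp only [val, Sum.elim_inr] at h0ne
          have h0lt : yv n w0 i < cst n w0 a.1 := lt_of_le_of_ne (not_lt.1 hb) (Ne.symm h0ne)
          exact absurd (hiff.1 h0lt) (not_lt.2 hlt.le)
    calc ∑ x : Σ i : Fin n, Ki n N i,
          (if ¬ (0 < Phi n N (.inr x) w0 ↔ 0 < Phi n N (.inr x) wq) then 1 else 0)
        = ∑ i : Fin n, ∑ k : Ki n N i, (if val n N wq i k < yv n wq i then 1 else 0) := by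
          rw [← Finset.univ_sigma_univ, Finset.sum_sigma]
          exact Finset.sum_congr rfl
            (fun i _ => Finset.sum_congr rfl (fun k _ => hterm i k))
      _ = ∑ i : Fin n, (q.2 i : ℕ) := by
          apply Finset.sum_congr rfl
          intro i _
          rw [← Finset.card_filter]
          exact pcount_ptv hN (fun i => q2_le q i) i
end Assembly

end IshDev

/-- Wall-crossing formula for the cone over the `N`-Ish arrangement, `N` a nest
(indexed so that `N₂ ⊆ N₃ ⊆ … ⊆ N_ℓ`, i.e. `N` is monotone): there is a base
chamber `B` with `∑_C t^{d(B,C)} = (1+t) ∏_{i=2}^{ℓ} (1 + t + ⋯ + t^{|N_i|+ℓ-i})`.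
Here `ℓ = n+1` and `|N_{j+2}| + ℓ - (j+2) = |N j| + (n - 1 - j)`. -/
theorem ish_wall_crossing (n : ℕ) (N : Fin n → Finset ℝ)
    (hN : ∀ i j : Fin n, i ≤ j → N i ⊆ N j) :
    ∃ B ∈ chambers (coneIshLin n N), ∀ t : ℝ,
      (∑ᶠ C ∈ chambers (coneIshLin n N), t ^ sepCount (coneIshLin n N) B C) =
        (1 + t) * ∏ j : Fin n,
          ∑ m ∈ Finset.range ((N j).card + (n - 1 - (j : ℕ)) + 1), t ^ m := by
  classical
  have hA : coneIshLin n N = Set.range (IshDev.Phi n N) := (IshDev.range_Phi n N).symm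
  rw [hA]
  refine ⟨IshDev.gch n N (IshDev.qB n N), ?_, ?_⟩
  · rw [IshDev.chambers_eq hN]
    exact ⟨_, rfl⟩
  · intro t
    rw [IshDev.chambers_eq hN, finsum_mem_range (IshDev.gch_inj hN), finsum_eq_sum_of_fintype]
    have hsep : ∀ q : IshDev.Q n N,
        sepCount (Set.range (IshDev.Phi n N)) (IshDev.gch n N (IshDev.qB n N))
          (IshDev.gch n N q) = (if q.1 then 0 else 1) + ∑ i : Fin n, (q.2 i : ℕ) :=
      IshDev.sep_formula hN
    calc ∑ q : IshDev.Q n N, t ^ sepCount (Set.range (IshDev.Phi n N))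
            (IshDev.gch n N (IshDev.qB n N)) (IshDev.gch n N q)
        = ∑ q : IshDev.Q n N, t ^ ((if q.1 then 0 else 1) + ∑ i : Fin n, (q.2 i : ℕ)) :=
          Finset.sum_congr rfl fun q _ => by rw [hsep q]
      _ = ∑ b : Bool, ∑ p : (∀ i : Fin n, Fin (IshDev.ecap n N i + 1)),
            t ^ ((if b then 0 else 1) + ∑ i : Fin n, ((p i : ℕ))) := Fintype.sum_prod_type _
      _ = ∑ b : Bool, (t ^ (if b then 0 else 1)) *
            ∑ p : (∀ i : Fin n, Fin (IshDev.ecap n N i + 1)), ∏ i : Fin n, t ^ (p i : ℕ) := by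
          apply Finset.sum_congr rfl; intro b _
          rw [Finset.mul_sum]
          apply Finset.sum_congr rfl; intro p _
          rw [pow_add, Finset.prod_pow_eq_pow_sum]
      _ = (1 + t) * ∑ p : (∀ i : Fin n, Fin (IshDev.ecap n N i + 1)),
            ∏ i : Fin n, t ^ (p i : ℕ) := by
          rw [Fintype.sum_bool]
          norm_num
          ring
      _ = (1 + t) * ∏ j : Fin n,
            ∑ m ∈ Finset.range ((N j).card + (n - 1 - (j : ℕ)) + 1), t ^ m := by
          congr 1
          have hps := Finset.prod_univ_sum
            (fun i : Fin n => (univ : Finset (Fin (IshDev.ecap n N i + 1))))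
            (fun i v => t ^ (v : ℕ))
          rw [Fintype.piFinset_univ] at hps
          rw [← hps]
          apply Finset.prod_congr rfl; intro j _
          rw [Fin.sum_univ_eq_sum_range (fun m => t ^ m) (IshDev.ecap n N j + 1)]
          rfl


end
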